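/- Let A_ℓ be an affine subspace of R^D with finite data set X^(ℓ) ⊆ A_ℓ, and let F be a face of Q^(ℓ) = conv(X^(ℓ)). If A_ℓ ∩ conv(X^(−ℓ)) = ∅, then aff(F) ∩ conv(X^(−F)) = ∅, where X^(−ℓ) is the set of all data points not in A_ℓ and X^(−F) is the set of all data points not lying on F. -/

import Mathlib

section Aux

open Set

variable {V : Type*} [AddCommGroup V] [Module ℝ V]

lemma lemA {F : Set V} (hFconv : Convex ℝ F) {v : V} (hv : v ∈ vectorSpan ℝ F)
    (hne : F.Nonempty) :
    ∃ m : ℝ, 0 ≤ m ∧ ∃ a ∈ F, ∃ b ∈ F, v = m • (a - b) := by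
  rw [vectorSpan_def] at hv
  obtain ⟨f0, hf0⟩ := hne
  induction hv using Submodule.span_induction with
  | mem x hx =>
    obtain ⟨a, ha, b, hb, rfl⟩ := hx
    exact ⟨1, zero_le_one, a, ha, b, hb, by simp [vsub_eq_sub]⟩
  | zero => exact ⟨0, le_refl _, f0, hf0, f0, hf0, by simp⟩
  | add x y hx hy ihx ihy =>
    obtain ⟨m1, hm1, a, ha, b, hb, rfl⟩ := ihx
    obtain ⟨m2, hm2, c, hc, d, hd, rfl⟩ := ihy
    rcases eq_or_lt_of_le (add_nonneg hm1 hm2) with h0 | h0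
    · have hm1' : m1 = 0 := by linarith [hm1, hm2]
      have hm2' : m2 = 0 := by linarith
      exact ⟨0, le_refl _, f0, hf0, f0, hf0, by simp [hm1', hm2']⟩
    · set m := m1 + m2 with hm
      have hmpos : 0 < m := h0
      refine ⟨m, hmpos.le, (m1/m) • a + (m2/m) • c,
        hFconv ha hc (by positivity) (by positivity)
          (by rw [← add_div, div_self hmpos.ne']),
        (m1/m) • b + (m2/m) • d,
        hFconv hb hd (by positivity) (by positivity)
          (by rw [← add_div, div_self hmpos.ne']), ?_⟩
      have hmne : m ≠ 0 := hmpos.ne'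
      match_scalars <;> field_simp <;> ring
  | smul c x hx ihx =>
    obtain ⟨m, hm, a, ha, b, hb, rfl⟩ := ihx
    rcases le_or_gt 0 c with hc | hc
    · exact ⟨c * m, mul_nonneg hc hm, a, ha, b, hb, by module⟩
    · exact ⟨-(c * m), by nlinarith, b, hb, a, ha, by module⟩

lemma lemA' {Q F : Set V} (hFconv : Convex ℝ F) (hF : IsExtreme ℝ Q F)
    {y : V} (hyQ : y ∈ Q) (hy : y ∈ affineSpan ℝ F) : y ∈ F := by
  rw [← AffineSubspace.mem_coe, coe_affineSpan] at hy
  obtain ⟨p1, hp1, v, hv, rfl⟩ := hy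
  have hne : F.Nonempty := ⟨p1, hp1⟩
  obtain ⟨m, hm, a, ha, b, hb, rfl⟩ := lemA hFconv hv hne
  rcases eq_or_lt_of_le hm with h0 | h0
  · simpa [← h0, vadd_eq_add] using hp1
  · set e : V := (1/(1+m)) • p1 + (m/(1+m)) • a with he
    have h1m : (0:ℝ) < 1 + m := by linarith
    have heF : e ∈ F := hFconv hp1 ha (by positivity) (by positivity)
      (by rw [← add_div, div_self h1m.ne'])
    have hkey : e ∈ openSegment ℝ (m • (a - b) +ᵥ p1) b := by
      refine ⟨1/(1+m), m/(1+m), by positivity, by positivity, by rw [← add_div, div_self h1m.ne'], ?_⟩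
      rw [he, vadd_eq_add]
      have h1mne : (1+m) ≠ 0 := h1m.ne'
      match_scalars <;> field_simp <;> ring
    exact hF.2 hyQ (hF.1 hb) heF hkey

lemma lemB {Q F : Set V} (hQ : Convex ℝ Q) (hF : IsExtreme ℝ Q F)
    (T : Finset V) (hTQ : (T : Set V) ⊆ Q) (hTF : ∀ x ∈ T, x ∉ F) :
    ∀ y ∈ convexHull ℝ (T : Set V), y ∉ F := by
  classical
  induction T using Finset.induction_on with
  | empty => simp
  | @insert a T haT ih =>
    intro y hy hyF
    rcases T.eq_empty_or_nonempty with rfl | hTne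
    · rw [show ((insert a (∅:Finset V) : Finset V) : Set V) = {a} by simp,
        convexHull_singleton, mem_singleton_iff] at hy
      exact hTF a (Finset.mem_insert_self a _) (hy ▸ hyF)
    · have haQ : a ∈ Q := hTQ (by simp)
      have hTQ' : (T : Set V) ⊆ Q := fun x hx => hTQ (by simp [hx])
      have hTF' : ∀ x ∈ T, x ∉ F := fun x hx => hTF x (Finset.mem_insert_of_mem hx)
      rw [Finset.coe_insert, convexHull_insert (by exact_mod_cast hTne), mem_convexJoin] at hy
      obtain ⟨a2, ha2, z, hz, α, β, hα, hβ, hαβ, hy⟩ := hy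
      rw [mem_singleton_iff] at ha2
      subst ha2
      have hzQ : z ∈ Q := convexHull_min hTQ' hQ hz
      rcases eq_or_lt_of_le hα with hα0 | hα0
      · have hβ1 : β = 1 := by linarith
        have hyz : y = z := by rw [← hy, ← hα0, hβ1]; simp
        exact ih hTQ' hTF' y (hyz ▸ hz) hyF
      · rcases eq_or_lt_of_le hβ with hβ0 | hβ0
        · have hα1 : α = 1 := by linarith
          have hya : y = a2 := by rw [← hy, hα1, ← hβ0]; simp
          exact hTF a2 (Finset.mem_insert_self a2 T) (hya ▸ hyF)
        · exact hTF a2 (Finset.mem_insert_self a2 T)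
            (hF.2 haQ hzQ hyF ⟨α, β, hα0, hβ0, hαβ, hy⟩)

end Aux

/-- If A_ℓ does not intersect conv(X^(−ℓ)), then for any face F of conv(X^(ℓ)),
aff(F) does not intersect conv(X^(−F)). -/
theorem stmt16 (D : ℕ) (A : AffineSubspace ℝ (Fin D → ℝ))
    (X Xl : Finset (Fin D → ℝ))
    (hXl : (Xl : Set (Fin D → ℝ)) = (X : Set (Fin D → ℝ)) ∩ (A : Set (Fin D → ℝ)))
    (F : Set (Fin D → ℝ)) (hFconv : Convex ℝ F)
    (hF : IsExtreme ℝ (convexHull ℝ (Xl : Set (Fin D → ℝ))) F)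
    (hsep : (A : Set (Fin D → ℝ)) ∩
        convexHull ℝ ((X : Set (Fin D → ℝ)) \ (A : Set (Fin D → ℝ))) = ∅) :
    (affineSpan ℝ F : Set (Fin D → ℝ)) ∩
      convexHull ℝ ((X : Set (Fin D → ℝ)) \ F) = ∅ := by
  classical
  set Q : Set (Fin D → ℝ) := convexHull ℝ (Xl : Set (Fin D → ℝ)) with hQ
  have hQconv : Convex ℝ Q := convex_convexHull ℝ _
  have hXlA : (Xl : Set (Fin D → ℝ)) ⊆ (A : Set (Fin D → ℝ)) := by rw [hXl]; exact Set.inter_subset_right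
  have hQA : Q ⊆ (A : Set (Fin D → ℝ)) := convexHull_min hXlA (A.convex)
  have hFA : F ⊆ (A : Set (Fin D → ℝ)) := fun x hx => hQA (hF.1 hx)
  -- the finset of points of Xl not in F
  set T : Finset (Fin D → ℝ) := Xl.filter (fun x => x ∉ F) with hT
  have hTcoe : (T : Set (Fin D → ℝ)) = (Xl : Set (Fin D → ℝ)) \ F := by
    ext x; simp [hT, Set.mem_diff]
  -- split X \ F
  have hsplit : (X : Set (Fin D → ℝ)) \ F = ((T : Set (Fin D → ℝ))) ∪ ((X : Set (Fin D → ℝ)) \ (A : Set (Fin D → ℝ))) := by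
    rw [hTcoe]
    ext x
    simp only [Set.mem_diff, Set.mem_union]
    constructor
    · rintro ⟨hxX, hxF⟩
      by_cases hxA : x ∈ (A : Set (Fin D → ℝ))
      · left; exact ⟨by rw [hXl]; exact ⟨hxX, hxA⟩, hxF⟩
      · right; exact ⟨hxX, hxA⟩
    · rintro (⟨hxXl, hxF⟩ | ⟨hxX, hxA⟩)
      · exact ⟨by rw [hXl] at hxXl; exact hxXl.1, hxF⟩
      · exact ⟨hxX, fun hxF => hxA (hFA hxF)⟩
  rw [Set.eq_empty_iff_forall_notMem]
  rintro y ⟨hy1, hy2⟩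
  have hyA : y ∈ (A : Set (Fin D → ℝ)) := by
    have : affineSpan ℝ F ≤ A := affineSpan_le.mpr hFA
    exact this hy1
  rw [hsplit] at hy2
  -- helper: no point of aff(F) ∩ Q outside F can be in conv T
  have hTsub : (T : Set (Fin D → ℝ)) ⊆ Q := by
    rw [hTcoe]
    exact fun x hx => subset_convexHull ℝ _ hx.1
  have hmain : ∀ u : (Fin D → ℝ), u ∈ convexHull ℝ (T : Set (Fin D → ℝ)) → u ∉ (affineSpan ℝ F : Set (Fin D → ℝ)) := by
    intro u huT hu1
    have huQ : u ∈ Q := convexHull_min hTsub hQconv huT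
    have huF : u ∈ F := lemA' hFconv hF huQ hu1
    exact lemB hQconv hF T hTsub (fun x hx => (Finset.mem_filter.mp hx).2) u huT huF
  -- helper: hsep rules out points of A in conv (X \ A)
  have hsepA : ∀ v : (Fin D → ℝ), v ∈ convexHull ℝ ((X : Set (Fin D → ℝ)) \ (A : Set (Fin D → ℝ))) → v ∉ (A : Set (Fin D → ℝ)) := by
    intro v hv hvA
    exact Set.eq_empty_iff_forall_notMem.mp hsep v ⟨hvA, hv⟩
  rcases Set.eq_empty_or_nonempty (T : Set (Fin D → ℝ)) with hTe | hTne
  · rw [hTe, Set.empty_union] at hy2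
    exact hsepA y hy2 hyA
  rcases Set.eq_empty_or_nonempty ((X : Set (Fin D → ℝ)) \ (A : Set (Fin D → ℝ))) with hXAe | hXAne
  · rw [hXAe, Set.union_empty] at hy2
    exact hmain y hy2 hy1
  rw [convexHull_union hTne hXAne, mem_convexJoin] at hy2
  obtain ⟨u, hu, v, hv, α, β, hα, hβ, hαβ, hy⟩ := hy2
  have huA : u ∈ (A : Set (Fin D → ℝ)) := hQA (convexHull_min hTsub hQconv hu)
  rcases eq_or_lt_of_le hβ with hβ0 | hβ0
  · have hα1 : α = 1 := by linarith
    have : y = u := by rw [← hy, hα1, ← hβ0]; simp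
    exact hmain u hu (this ▸ hy1)
  · -- v is an affine combination of y and u, both in A
    have hvA : v ∈ (A : Set (Fin D → ℝ)) := by
      have hveq : v = β⁻¹ • (y -ᵥ u) +ᵥ u := by
        have hβne : β ≠ 0 := hβ0.ne'
        have hα' : α = 1 - β := by linarith
        rw [← hy, hα']
        simp only [vsub_eq_sub, vadd_eq_add]
        match_scalars <;> field_simp <;> ring
      rw [hveq]
      exact AffineSubspace.smul_vsub_vadd_mem A β⁻¹ hyA huA huA
    exact hsepA v hv hvA
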